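/- Let k be a commutative ring and grade R = k[a1, a3] by |a1| = 1, |a3| = 3. Let T = coker(R[1/a1] ⊕ R[1/a3] → R[1/(a1*a3)]), a graded k-module with basis the monomials a1^{-i}*a3^{-j}, i, j ≥ 1. For each integer n, the bilinear pairing R_n × T_{-n-4} → k defined by multiplying and taking the coefficient of a1^{-1}*a3^{-1} is a perfect pairing of finitely generated free k-modules (i.e., it induces isomorphisms R_n ≅ Hom_k(T_{-n-4}, k) and T_{-n-4} ≅ Hom_k(R_n, k)). -/

import Mathlib

namespace Stmt5Aux

open Finsupp

variable {k : Type*} [CommRing k] {n : ℤ}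

/-- The pairing as a bilinear map. -/
noncomputable def φ (k : Type*) [CommRing k] :
    AddMonoidAlgebra k (ℤ × ℤ) →ₗ[k] AddMonoidAlgebra k (ℤ × ℤ) →ₗ[k] k :=
  (LinearMap.mul k (AddMonoidAlgebra k (ℤ × ℤ))).compr₂
    ((Finsupp.lapply ((-1 : ℤ), (-1 : ℤ))).comp
      (AddMonoidAlgebra.coeffLinearEquiv k).toLinearMap)

lemma φ_apply (a b : AddMonoidAlgebra k (ℤ × ℤ)) :
    φ k a b = (a * b).coeff ((-1 : ℤ), (-1 : ℤ)) := rfl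

noncomputable def J (n : ℤ) : Finset ℤ := (Finset.Icc (0 : ℤ) n).filter fun j => 3 * j ≤ n

lemma mem_J {j : ℤ} : j ∈ J n ↔ 0 ≤ j ∧ 3 * j ≤ n := by
  simp only [J, Finset.mem_filter, Finset.mem_Icc]
  exact ⟨fun h => ⟨h.1.1, h.2⟩, fun h => ⟨⟨h.1, by linarith⟩, h.2⟩⟩

noncomputable def fR (k : Type*) [CommRing k] (n : ℤ) (j : J n) :
    AddMonoidAlgebra k (ℤ × ℤ) :=
  AddMonoidAlgebra.single ((n - 3 * (j : ℤ), (j : ℤ)) : ℤ × ℤ) 1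

noncomputable def fT (k : Type*) [CommRing k] (n : ℤ) (j : J n) :
    AddMonoidAlgebra k (ℤ × ℤ) :=
  AddMonoidAlgebra.single ((3 * (j : ℤ) - n - 1, -(j : ℤ) - 1) : ℤ × ℤ) 1

lemma li_single {ι : Type*} (g : ι → ℤ × ℤ) (hg : Function.Injective g) :
    LinearIndependent k fun i => (AddMonoidAlgebra.single (g i) 1 : AddMonoidAlgebra k (ℤ × ℤ)) := by
  have h : LinearIndependent k fun p : ℤ × ℤ => (Finsupp.single p 1 : (ℤ × ℤ) →₀ k) := by
    simpa [Finsupp.coe_basisSingleOne] using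
      (Finsupp.basisSingleOne (R := k) (ι := ℤ × ℤ)).linearIndependent
  exact (h.map' _ (AddMonoidAlgebra.coeffLinearEquiv k).symm.ker).comp g hg

lemma liR : LinearIndependent k (fR k n) := by
  apply li_single
  intro a b hab
  exact Subtype.ext (congrArg Prod.snd hab)

lemma liT : LinearIndependent k (fT k n) := by
  apply li_single
  intro a b hab
  have := congrArg Prod.snd hab
  simp only at this
  exact Subtype.ext (by linarith)

lemma spanR :
    {m : AddMonoidAlgebra k (ℤ × ℤ) |
      ∃ i j : ℕ, (i : ℤ) + 3 * (j : ℤ) = n ∧ m = AddMonoidAlgebra.single ((i : ℤ), (j : ℤ)) (1 : k)}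
      = Set.range (fR k n) := by
  ext m
  constructor
  · rintro ⟨i, j, hij, rfl⟩
    refine ⟨⟨j, mem_J.mpr ⟨Int.ofNat_nonneg j, by omega⟩⟩, ?_⟩
    have hpt : (((i : ℤ), (j : ℤ)) : ℤ × ℤ) = ((n - 3 * (j : ℤ), (j : ℤ)) : ℤ × ℤ) := by
      simp only [Prod.mk.injEq, and_true, true_and]; omega
    rw [fR, hpt]
  · rintro ⟨⟨j, hj⟩, rfl⟩
    rw [mem_J] at hj
    have hpt : ((n - 3 * j, j) : ℤ × ℤ)
        = ((((n - 3 * j).toNat : ℕ) : ℤ), ((j.toNat : ℕ) : ℤ)) := by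
      simp only [Prod.mk.injEq, and_true, true_and]; omega
    refine ⟨(n - 3 * j).toNat, j.toNat, ?_, by rw [fR, hpt]⟩
    omega

lemma spanT :
    {m : AddMonoidAlgebra k (ℤ × ℤ) |
      ∃ i j : ℤ, i < 0 ∧ j < 0 ∧ i + 3 * j = -n - 4 ∧ m = AddMonoidAlgebra.single (i, j) (1 : k)}
      = Set.range (fT k n) := by
  ext m
  constructor
  · rintro ⟨i, j, hi, hj, hij, rfl⟩
    refine ⟨⟨-j - 1, mem_J.mpr ⟨by omega, by omega⟩⟩, ?_⟩
    have hpt : ((i, j) : ℤ × ℤ)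
        = ((3 * (-j - 1) - n - 1, -(-j - 1) - 1) : ℤ × ℤ) := by
      simp only [Prod.mk.injEq, and_true, true_and]; omega
    rw [fT, hpt]
  · rintro ⟨⟨j, hj⟩, rfl⟩
    rw [mem_J] at hj
    exact ⟨3 * j - n - 1, -j - 1, by omega, by omega, by ring, rfl⟩

lemma φ_fR_fT (i j : J n) :
    φ k (fR k n i) (fT k n j) = if j = i then 1 else 0 := by
  rw [fR, fT, φ_apply, AddMonoidAlgebra.single_mul_single, Prod.mk_add_mk]
  rcases eq_or_ne j i with h | h
  · subst h
    rw [if_pos rfl]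
    have : ((n - 3 * (j : ℤ) + (3 * (j : ℤ) - n - 1), (j : ℤ) + (-(j : ℤ) - 1)) : ℤ × ℤ)
        = ((-1 : ℤ), (-1 : ℤ)) := by
      simp only [Prod.mk.injEq]; constructor <;> ring
    rw [this]
    simp [AddMonoidAlgebra.coeff_single_apply]
  · rw [if_neg h]
    have hne : ((n - 3 * (i : ℤ) + (3 * (j : ℤ) - n - 1), (i : ℤ) + (-(j : ℤ) - 1)) : ℤ × ℤ)
        ≠ ((-1 : ℤ), (-1 : ℤ)) := by
      intro hc
      apply h
      have := congrArg Prod.snd hc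
      simp only at this
      exact Subtype.ext (by linarith)
    rw [AddMonoidAlgebra.coeff_single_apply, if_neg hne]

end Stmt5Aux

theorem stmt5 (k : Type*) [CommRing k] (n : ℤ)
    (Rn Td : Submodule k (AddMonoidAlgebra k (ℤ × ℤ)))
    (hR : Rn = Submodule.span k {m : AddMonoidAlgebra k (ℤ × ℤ) |
      ∃ i j : ℕ, (i : ℤ) + 3 * (j : ℤ) = n ∧ m = AddMonoidAlgebra.single ((i : ℤ), (j : ℤ)) (1 : k)})
    (hT : Td = Submodule.span k {m : AddMonoidAlgebra k (ℤ × ℤ) |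
      ∃ i j : ℤ, i < 0 ∧ j < 0 ∧ i + 3 * j = -n - 4 ∧ m = AddMonoidAlgebra.single (i, j) (1 : k)}) :
    Module.Finite k Rn ∧ Module.Free k Rn ∧ Module.Finite k Td ∧ Module.Free k Td ∧
    (∀ r : Rn, (∀ t : Td,
      ((r : AddMonoidAlgebra k (ℤ × ℤ)) * (t : AddMonoidAlgebra k (ℤ × ℤ))).coeff
        ((-1 : ℤ), (-1 : ℤ)) = 0) → r = 0) ∧
    (∀ t : Td, (∀ r : Rn,
      ((r : AddMonoidAlgebra k (ℤ × ℤ)) * (t : AddMonoidAlgebra k (ℤ × ℤ))).coeff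
        ((-1 : ℤ), (-1 : ℤ)) = 0) → t = 0) ∧
    (∀ F : Td →ₗ[k] k, ∃ r : Rn, ∀ t : Td,
      ((r : AddMonoidAlgebra k (ℤ × ℤ)) * (t : AddMonoidAlgebra k (ℤ × ℤ))).coeff
        ((-1 : ℤ), (-1 : ℤ)) = F t) ∧
    (∀ G : Rn →ₗ[k] k, ∃ t : Td, ∀ r : Rn,
      ((r : AddMonoidAlgebra k (ℤ × ℤ)) * (t : AddMonoidAlgebra k (ℤ × ℤ))).coeff
        ((-1 : ℤ), (-1 : ℤ)) = G r) := by
  classical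
  subst hR hT
  rw [Stmt5Aux.spanR, Stmt5Aux.spanT]
  set RR := Submodule.span k (Set.range (Stmt5Aux.fR k n)) with hRR
  set TT := Submodule.span k (Set.range (Stmt5Aux.fT k n)) with hTT
  -- bases
  let bR : Module.Basis (Stmt5Aux.J n) k RR := Module.Basis.span Stmt5Aux.liR
  let bT : Module.Basis (Stmt5Aux.J n) k TT := Module.Basis.span Stmt5Aux.liT
  -- restricted pairing
  let P : RR →ₗ[k] TT →ₗ[k] k :=
    ((Stmt5Aux.φ k).comp RR.subtype).compl₂ TT.subtype
  have hP : ∀ (r : RR) (t : TT), P r t =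
      ((r : AddMonoidAlgebra k (ℤ × ℤ)) * (t : AddMonoidAlgebra k (ℤ × ℤ))).coeff
        ((-1 : ℤ), (-1 : ℤ)) := fun r t => rfl
  have hPb : ∀ i j : Stmt5Aux.J n, P (bR i) (bT j) = if j = i then 1 else 0 := by
    intro i j
    have h1 : ((bR i : AddMonoidAlgebra k (ℤ × ℤ))) = Stmt5Aux.fR k n i := congrArg Subtype.val (Module.Basis.span_apply _ _)
    have h2 : ((bT j : AddMonoidAlgebra k (ℤ × ℤ))) = Stmt5Aux.fT k n j := congrArg Subtype.val (Module.Basis.span_apply _ _)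
    have : P (bR i) (bT j) = Stmt5Aux.φ k (Stmt5Aux.fR k n i) (Stmt5Aux.fT k n j) := by
      rw [← h1, ← h2]; rfl
    rw [this, Stmt5Aux.φ_fR_fT]
  -- P (bR i) is the i-th coordinate function of bT, and symmetrically
  have hcoordT : ∀ i : Stmt5Aux.J n, P (bR i) = bT.coord i := by
    intro i
    apply bT.ext
    intro j
    rw [hPb i j, Module.Basis.coord_apply, Module.Basis.repr_self, Finsupp.single_apply]
  have hcoordR : ∀ j : Stmt5Aux.J n, P.flip (bT j) = bR.coord j := by
    intro j
    apply bR.ext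
    intro i
    rw [LinearMap.flip_apply, hPb i j, Module.Basis.coord_apply, Module.Basis.repr_self,
      Finsupp.single_apply]
    exact if_congr eq_comm rfl rfl
  refine ⟨Module.Finite.of_basis bR, Module.Free.of_basis bR,
    Module.Finite.of_basis bT, Module.Free.of_basis bT, ?_, ?_, ?_, ?_⟩
  · intro r hr
    rw [← Module.Basis.forall_coord_eq_zero_iff bR]
    intro j
    rw [← hcoordR j, LinearMap.flip_apply, hP]
    exact hr _
  · intro t ht
    rw [← Module.Basis.forall_coord_eq_zero_iff bT]
    intro i
    rw [← hcoordT i, hP]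
    exact ht _
  · intro F
    refine ⟨bR.repr.symm (Finsupp.equivFunOnFinite.symm fun j => F (bT j)), fun t => ?_⟩
    rw [← hP]
    have : P (bR.repr.symm (Finsupp.equivFunOnFinite.symm fun j => F (bT j))) = F := by
      apply bT.ext
      intro j
      rw [← LinearMap.flip_apply, hcoordR j, Module.Basis.coord_apply,
        LinearEquiv.apply_symm_apply]
      rfl
    rw [this]
  · intro G
    refine ⟨bT.repr.symm (Finsupp.equivFunOnFinite.symm fun i => G (bR i)), fun r => ?_⟩
    rw [← hP]
    have : P.flip (bT.repr.symm (Finsupp.equivFunOnFinite.symm fun i => G (bR i))) = G := by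
      apply bR.ext
      intro i
      rw [LinearMap.flip_apply, hcoordT i, Module.Basis.coord_apply,
        LinearEquiv.apply_symm_apply]
      rfl
    rw [← LinearMap.flip_apply, this]
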